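/- Let p be an aperiodic, irreducible, reversible Markov chain on [n] with stationary distribution π, and p̃ another chain with Δ = p̃ − p. Let π̃^{(t)} be the distribution at time t under p̃ starting from π̃^{(0)}. Then ‖π̃^{(t)} − π‖/‖π‖ ≤ ρ^t (‖π̃^{(0)} − π‖/‖π‖) √(π_max/π_min) + (1/(1−ρ)) ‖Δ‖₂ √(π_max/π_min), where ρ = λ_max(p) + ‖Δ‖₂ √(π_max/π_min) and λ_max(p) is the second largest eigenvalue modulus of p. -/

import Mathlib

open Matrix Finset
open scoped Matrix.Norms.L2Operator

noncomputable def opNorm {m n : ℕ} (A : Matrix (Fin m) (Fin n) ℝ) : ℝ :=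
  ‖LinearMap.toContinuousLinearMap (Matrix.toEuclideanLin A)‖

noncomputable def euclNorm {n : ℕ} (v : Fin n → ℝ) : ℝ := Real.sqrt (∑ i, v i ^ 2)

/-- Second largest eigenvalue modulus of a reversible chain `p` with stationary
distribution `π` (summing to 1). -/
noncomputable def lamMax {n : ℕ} (π : Fin n → ℝ) (p : Matrix (Fin n) (Fin n) ℝ) : ℝ :=
  opNorm (Matrix.of fun i j =>
    Real.sqrt (π i) * p i j / Real.sqrt (π j) - Real.sqrt (π i) * Real.sqrt (π j))

/-- Perturbation lemma for Markov chains (Lemma 2 of Negahban–Oh–Shah): for an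
aperiodic, irreducible (i.e. primitive), reversible chain `p` with stationary
distribution `π` and a perturbed chain `p̃ = p + Δ`, the distribution `π̃^{(t)}` at time
`t` under `p̃` started from `π̃^{(0)}` satisfies
`‖π̃^{(t)} − π‖/‖π‖ ≤ ρ^t (‖π̃^{(0)} − π‖/‖π‖)√(π_max/π_min) + ‖Δ‖₂ √(π_max/π_min)/(1−ρ)`
with `ρ = λ_max(p) + ‖Δ‖₂ √(π_max/π_min)` (assumed `< 1`). -/
lemma opNorm_eq_norm {m n : ℕ} (A : Matrix (Fin m) (Fin n) ℝ) : opNorm A = ‖A‖ := rfl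

lemma euclNorm_eq {n : ℕ} (v : Fin n → ℝ) :
    euclNorm v = ‖(EuclideanSpace.equiv (Fin n) ℝ).symm v‖ := by
  simp [euclNorm, EuclideanSpace.norm_eq, sq_abs]

lemma euclNorm_nonneg {n : ℕ} (v : Fin n → ℝ) : 0 ≤ euclNorm v := Real.sqrt_nonneg _

lemma euclNorm_add_le {n : ℕ} (u v : Fin n → ℝ) :
    euclNorm (fun i => u i + v i) ≤ euclNorm u + euclNorm v := by
  rw [euclNorm_eq, euclNorm_eq, euclNorm_eq]
  exact norm_add_le ((EuclideanSpace.equiv (Fin n) ℝ).symm u)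
    ((EuclideanSpace.equiv (Fin n) ℝ).symm v)

lemma euclNorm_mulVec_le {n : ℕ} (A : Matrix (Fin n) (Fin n) ℝ) (v : Fin n → ℝ) :
    euclNorm (A.mulVec v) ≤ opNorm A * euclNorm v := by
  rw [euclNorm_eq, euclNorm_eq, opNorm_eq_norm]
  exact A.l2_opNorm_mulVec ((EuclideanSpace.equiv (Fin n) ℝ).symm v)

lemma opNorm_transpose {n : ℕ} (A : Matrix (Fin n) (Fin n) ℝ) : opNorm Aᵀ = opNorm A := by
  rw [opNorm_eq_norm, opNorm_eq_norm, ← conjTranspose_eq_transpose_of_trivial,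
    l2_opNorm_conjTranspose]

lemma euclNorm_vecMul_le {n : ℕ} (A : Matrix (Fin n) (Fin n) ℝ) (v : Fin n → ℝ) :
    euclNorm (Matrix.vecMul v A) ≤ opNorm A * euclNorm v := by
  rw [← Matrix.mulVec_transpose, ← opNorm_transpose A]
  exact euclNorm_mulVec_le Aᵀ v

lemma euclNorm_le_of_sq_le {n : ℕ} {u v : Fin n → ℝ} {c : ℝ} (hc : 0 ≤ c)
    (h : ∀ i, u i ^ 2 ≤ c ^ 2 * v i ^ 2) : euclNorm u ≤ c * euclNorm v := by
  rw [euclNorm, euclNorm, ← Real.sqrt_sq hc, ← Real.sqrt_mul (sq_nonneg c)]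
  apply Real.sqrt_le_sqrt
  rw [Finset.mul_sum]
  exact Finset.sum_le_sum fun i _ => h i

lemma opNorm_nonneg {m n : ℕ} (A : Matrix (Fin m) (Fin n) ℝ) : 0 ≤ opNorm A :=
  norm_nonneg _

theorem markov_perturbation {n : ℕ} [NeZero n]
    (p tp : Matrix (Fin n) (Fin n) ℝ) (π : Fin n → ℝ)
    (hπpos : ∀ i, 0 < π i) (hπsum : ∑ i, π i = 1)
    (hpnn : ∀ i j, 0 ≤ p i j) (hprow : ∀ i, ∑ j, p i j = 1)
    (htpnn : ∀ i j, 0 ≤ tp i j) (htprow : ∀ i, ∑ j, tp i j = 1)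
    (hprimitive : ∃ k : ℕ, ∀ i j, 0 < (p ^ k) i j)
    (hprev : ∀ i j, π i * p i j = π j * p j i)
    (π0 : Fin n → ℝ) (hπ0nn : ∀ i, 0 ≤ π0 i) (hπ0sum : ∑ i, π0 i = 1)
    (πmax πmin : ℝ)
    (hπmax : πmax = Finset.univ.sup' Finset.univ_nonempty π)
    (hπmin : πmin = Finset.univ.inf' Finset.univ_nonempty π)
    (ρ : ℝ) (hρ : ρ = lamMax π p + opNorm (tp - p) * Real.sqrt (πmax / πmin))
    (hρ1 : ρ < 1) (t : ℕ) :
    euclNorm (fun i => (Matrix.vecMul π0 (tp ^ t)) i - π i) / euclNorm π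
      ≤ ρ ^ t * (euclNorm (fun i => π0 i - π i) / euclNorm π) * Real.sqrt (πmax / πmin)
        + (1 / (1 - ρ)) * opNorm (tp - p) * Real.sqrt (πmax / πmin) := by
  classical
  -- bounds on π
  have hπmin_le : ∀ i, πmin ≤ π i := fun i => hπmin ▸ inf'_le π (mem_univ i)
  have hle_πmax : ∀ i, π i ≤ πmax := fun i => hπmax ▸ le_sup' π (mem_univ i)
  have hπminpos : 0 < πmin := hπmin ▸ (Finset.lt_inf'_iff _).2 fun i _ => hπpos i
  have hπmaxpos : 0 < πmax := by
    obtain ⟨i⟩ := (inferInstance : Nonempty (Fin n))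
    exact lt_of_lt_of_le (hπpos i) (hle_πmax i)
  have hsπmin : (0:ℝ) < Real.sqrt πmin := Real.sqrt_pos.2 hπminpos
  have hsπ : ∀ i, (0:ℝ) < Real.sqrt (π i) := fun i => Real.sqrt_pos.2 (hπpos i)
  have hsdiv : Real.sqrt (πmax / πmin) = Real.sqrt πmax / Real.sqrt πmin :=
    Real.sqrt_div hπmaxpos.le _
  have hNπ : 0 < euclNorm π := by
    obtain ⟨i⟩ := (inferInstance : Nonempty (Fin n))
    exact Real.sqrt_pos.2 (Finset.sum_pos (fun j _ => pow_pos (hπpos j) 2) ⟨i, mem_univ i⟩)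
  -- the error vectors
  set e : ℕ → Fin n → ℝ := fun s i => Matrix.vecMul π0 (tp ^ s) i - π i with he
  set x : ℕ → Fin n → ℝ := fun s i => e s i / Real.sqrt (π i) with hx
  have hex : ∀ s i, e s i = x s i * Real.sqrt (π i) := by
    intro s i; rw [hx]; exact (div_mul_cancel₀ _ (hsπ i).ne').symm
  -- mass conservation
  have hmass : ∀ s, ∑ i, Matrix.vecMul π0 (tp ^ s) i = 1 := by
    intro s
    induction s with
    | zero => simpa using hπ0sum
    | succ s ih =>
      rw [pow_succ, ← Matrix.vecMul_vecMul]
      calc ∑ j, Matrix.vecMul (Matrix.vecMul π0 (tp ^ s)) tp j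
          = ∑ j, ∑ i, Matrix.vecMul π0 (tp ^ s) i * tp i j := by
            refine Finset.sum_congr rfl fun j _ => ?_
            simp [Matrix.vecMul, dotProduct]
        _ = ∑ i, Matrix.vecMul π0 (tp ^ s) i * ∑ j, tp i j := by
            rw [Finset.sum_comm]; simp [Finset.mul_sum]
        _ = 1 := by simp only [htprow, mul_one]; exact ih
  have hesum : ∀ s, ∑ i, e s i = 0 := by
    intro s; simp only [he, Finset.sum_sub_distrib, hmass s, hπsum, sub_self]
  -- stationarity
  have hstat : ∀ j, ∑ i, π i * p i j = π j := by
    intro j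
    calc ∑ i, π i * p i j = ∑ i, π j * p j i := Finset.sum_congr rfl fun i _ => hprev i j
      _ = π j := by rw [← Finset.mul_sum, hprow j, mul_one]
  -- the symmetrized matrix
  set Q : Matrix (Fin n) (Fin n) ℝ := Matrix.of fun i j =>
    Real.sqrt (π i) * p i j / Real.sqrt (π j) - Real.sqrt (π i) * Real.sqrt (π j) with hQ
  set Δ : Matrix (Fin n) (Fin n) ℝ := tp - p with hΔdef
  -- key recursion identity
  have key : ∀ s, x (s + 1) = fun j => Matrix.vecMul (x s) Q j
      + (Matrix.vecMul (e s) Δ j / Real.sqrt (π j)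
      + Matrix.vecMul π Δ j / Real.sqrt (π j)) := by
    intro s
    funext j
    have hQx : Matrix.vecMul (x s) Q j = (∑ i, e s i * p i j) / Real.sqrt (π j) := by
      calc Matrix.vecMul (x s) Q j
          = ∑ i, x s i * (Real.sqrt (π i) * p i j / Real.sqrt (π j)
              - Real.sqrt (π i) * Real.sqrt (π j)) := by
            simp [Matrix.vecMul, dotProduct, hQ]
        _ = ∑ i, (e s i * p i j / Real.sqrt (π j) - e s i * Real.sqrt (π j)) := by
            refine Finset.sum_congr rfl fun i _ => ?_
            rw [hex s i]; ring
        _ = (∑ i, e s i * p i j) / Real.sqrt (π j)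
              - (∑ i, e s i) * Real.sqrt (π j) := by
            rw [Finset.sum_sub_distrib, Finset.sum_div, Finset.sum_mul]
        _ = (∑ i, e s i * p i j) / Real.sqrt (π j) := by
            rw [hesum s, zero_mul, sub_zero]
    have heΔ : Matrix.vecMul (e s) Δ j = ∑ i, e s i * Δ i j := by
      simp [Matrix.vecMul, dotProduct]
    have hπΔ : Matrix.vecMul π Δ j = ∑ i, π i * Δ i j := by
      simp [Matrix.vecMul, dotProduct]
    have hesucc : e (s + 1) j = (∑ i, e s i * p i j) + (∑ i, e s i * Δ i j)
        + ∑ i, π i * Δ i j := by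
      have h1 : e (s + 1) j = (∑ i, (e s i + π i) * tp i j) - π j := by
        simp only [he, pow_succ, ← Matrix.vecMul_vecMul]
        congr 1
        simp only [Matrix.vecMul, dotProduct]
        exact Finset.sum_congr rfl fun i _ => by rw [sub_add_cancel]
      have h2 : ∀ i, tp i j = p i j + Δ i j := by
        intro i; simp [hΔdef]
      rw [h1]
      calc (∑ i, (e s i + π i) * tp i j) - π j
          = (∑ i, (e s i * p i j + e s i * Δ i j + (π i * p i j + π i * Δ i j))) - π j := by
            congr 1; exact Finset.sum_congr rfl fun i _ => by rw [h2 i]; ring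
        _ = ((∑ i, e s i * p i j) + (∑ i, e s i * Δ i j)
              + ((∑ i, π i * p i j) + ∑ i, π i * Δ i j)) - π j := by
            rw [Finset.sum_add_distrib, Finset.sum_add_distrib, Finset.sum_add_distrib]
        _ = _ := by rw [hstat j]; ring
    have : x (s + 1) j = e (s + 1) j / Real.sqrt (π j) := rfl
    rw [this, hesucc, hQx, heΔ, hπΔ]
    ring
  -- norm bounds
  have hlam : lamMax π p = opNorm Q := rfl
  have hlamnn : 0 ≤ lamMax π p := opNorm_nonneg _
  have hΔnn : 0 ≤ opNorm Δ := opNorm_nonneg _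
  have hρnn : 0 ≤ ρ := by
    rw [hρ]; exact add_nonneg hlamnn (mul_nonneg hΔnn (Real.sqrt_nonneg _))
  have h1ρ : 0 < 1 - ρ := by linarith
  have hdivlem : ∀ w : Fin n → ℝ,
      euclNorm (fun j => w j / Real.sqrt (π j)) ≤ (Real.sqrt πmin)⁻¹ * euclNorm w := by
    intro w
    apply euclNorm_le_of_sq_le (by positivity)
    intro i
    rw [div_pow, Real.sq_sqrt (hπpos i).le, inv_pow, Real.sq_sqrt hπminpos.le,
      inv_mul_eq_div]
    exact div_le_div_of_nonneg_left (sq_nonneg _) hπminpos (hπmin_le i)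
  have he_bound : ∀ s, euclNorm (e s) ≤ Real.sqrt πmax * euclNorm (x s) := by
    intro s
    apply euclNorm_le_of_sq_le (Real.sqrt_nonneg _)
    intro i
    rw [hex s i, mul_pow, Real.sq_sqrt (hπpos i).le, Real.sq_sqrt hπmaxpos.le]
    nlinarith [sq_nonneg (x s i), hle_πmax i]
  set b : ℝ := opNorm Δ * euclNorm π / Real.sqrt πmin with hbdef
  have hbnn : 0 ≤ b := div_nonneg (mul_nonneg hΔnn (euclNorm_nonneg π)) (Real.sqrt_nonneg _)
  have hrecX : ∀ s, euclNorm (x (s + 1)) ≤ ρ * euclNorm (x s) + b := by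
    intro s
    have h1 : euclNorm (fun j => Matrix.vecMul (x s) Q j)
        ≤ lamMax π p * euclNorm (x s) := by
      rw [hlam]; exact euclNorm_vecMul_le Q (x s)
    have h2 : euclNorm (fun j => Matrix.vecMul (e s) Δ j / Real.sqrt (π j))
        ≤ opNorm Δ * (Real.sqrt πmax / Real.sqrt πmin) * euclNorm (x s) := by
      calc euclNorm (fun j => Matrix.vecMul (e s) Δ j / Real.sqrt (π j))
          ≤ (Real.sqrt πmin)⁻¹ * euclNorm (Matrix.vecMul (e s) Δ) := hdivlem _
        _ ≤ (Real.sqrt πmin)⁻¹ * (opNorm Δ * euclNorm (e s)) := by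
            gcongr
            exact euclNorm_vecMul_le Δ (e s)
        _ ≤ (Real.sqrt πmin)⁻¹ * (opNorm Δ * (Real.sqrt πmax * euclNorm (x s))) := by
            gcongr
            exact he_bound s
        _ = opNorm Δ * (Real.sqrt πmax / Real.sqrt πmin) * euclNorm (x s) := by ring
    have h3 : euclNorm (fun j => Matrix.vecMul π Δ j / Real.sqrt (π j)) ≤ b := by
      calc euclNorm (fun j => Matrix.vecMul π Δ j / Real.sqrt (π j))
          ≤ (Real.sqrt πmin)⁻¹ * euclNorm (Matrix.vecMul π Δ) := hdivlem _
        _ ≤ (Real.sqrt πmin)⁻¹ * (opNorm Δ * euclNorm π) := by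
            gcongr
            exact euclNorm_vecMul_le Δ π
        _ = b := by rw [hbdef]; ring
    calc euclNorm (x (s + 1))
        = euclNorm (fun j => Matrix.vecMul (x s) Q j
            + (Matrix.vecMul (e s) Δ j / Real.sqrt (π j)
            + Matrix.vecMul π Δ j / Real.sqrt (π j))) := by rw [key s]
      _ ≤ euclNorm (fun j => Matrix.vecMul (x s) Q j)
            + euclNorm (fun j => Matrix.vecMul (e s) Δ j / Real.sqrt (π j)
            + Matrix.vecMul π Δ j / Real.sqrt (π j)) := euclNorm_add_le _ _
      _ ≤ euclNorm (fun j => Matrix.vecMul (x s) Q j)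
            + (euclNorm (fun j => Matrix.vecMul (e s) Δ j / Real.sqrt (π j))
            + euclNorm (fun j => Matrix.vecMul π Δ j / Real.sqrt (π j))) :=
          add_le_add le_rfl (euclNorm_add_le _ _)
      _ ≤ lamMax π p * euclNorm (x s)
            + (opNorm Δ * (Real.sqrt πmax / Real.sqrt πmin) * euclNorm (x s) + b) :=
          add_le_add h1 (add_le_add h2 h3)
      _ = ρ * euclNorm (x s) + b := by rw [hρ, hsdiv]; ring
  have hXt : ∀ s, euclNorm (x s) ≤ ρ ^ s * euclNorm (x 0) + b / (1 - ρ) := by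
    intro s
    induction s with
    | zero =>
      rw [pow_zero, one_mul]
      exact le_add_of_nonneg_right (div_nonneg hbnn h1ρ.le)
    | succ s ih =>
      calc euclNorm (x (s + 1)) ≤ ρ * euclNorm (x s) + b := hrecX s
        _ ≤ ρ * (ρ ^ s * euclNorm (x 0) + b / (1 - ρ)) + b := by gcongr
        _ = ρ ^ (s + 1) * euclNorm (x 0) + (ρ * (b / (1 - ρ)) + b) := by ring
        _ = ρ ^ (s + 1) * euclNorm (x 0) + b / (1 - ρ) := by
            congr 1
            field_simp
            ring
  have hx0 : euclNorm (x 0) ≤ (Real.sqrt πmin)⁻¹ * euclNorm (e 0) := hdivlem (e 0)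
  have he0 : (fun i => π0 i - π i) = e 0 := by
    funext i; simp [he]
  have hgt : (fun i => Matrix.vecMul π0 (tp ^ t) i - π i) = e t := rfl
  rw [hgt, he0]
  have hnum : euclNorm (e t)
      ≤ Real.sqrt πmax * (ρ ^ t * ((Real.sqrt πmin)⁻¹ * euclNorm (e 0)) + b / (1 - ρ)) := by
    calc euclNorm (e t) ≤ Real.sqrt πmax * euclNorm (x t) := he_bound t
      _ ≤ Real.sqrt πmax * (ρ ^ t * euclNorm (x 0) + b / (1 - ρ)) := by
          gcongr
          exact hXt t
      _ ≤ Real.sqrt πmax * (ρ ^ t * ((Real.sqrt πmin)⁻¹ * euclNorm (e 0)) + b / (1 - ρ)) := by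
          gcongr
  calc euclNorm (e t) / euclNorm π
      ≤ Real.sqrt πmax * (ρ ^ t * ((Real.sqrt πmin)⁻¹ * euclNorm (e 0)) + b / (1 - ρ))
          / euclNorm π := by gcongr
    _ = ρ ^ t * (euclNorm (e 0) / euclNorm π) * Real.sqrt (πmax / πmin)
          + 1 / (1 - ρ) * opNorm Δ * Real.sqrt (πmax / πmin) := by
        rw [hsdiv, hbdef]
        field_simp
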